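/- Let k, C, n be real numbers with C ≠ 0, n ≠ 0 and n ≠ 1, and define the Lagrangian L(x, v, t) = C·v^n·e^{n·k·x} (with v^n = exp(n·log v) for v > 0). Then a twice differentiable curve x : ℝ → ℝ with x'(t) > 0 for all t satisfies the Euler–Lagrange equation of L if and only if x''(t) + k·x'(t)² = 0 for all t ∈ ℝ. In particular, the equation ẍ + kẋ² = 0 admits a one-parameter family of different Lagrangians. -/

import Mathlib

/-- Partial derivative of the Lagrangian `L x v t` in the velocity argument. -/
noncomputable def pv (L : ℝ → ℝ → ℝ → ℝ) (x v t : ℝ) : ℝ := deriv (fun w => L x w t) v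

/-- Partial derivative of the Lagrangian `L x v t` in the position argument. -/
noncomputable def px (L : ℝ → ℝ → ℝ → ℝ) (x v t : ℝ) : ℝ := deriv (fun y => L y v t) x

/-- A curve `x` satisfies the Euler–Lagrange equation of `L`:
`(d/dt)[(∂L/∂v)(x t, x' t, t)] = (∂L/∂x)(x t, x' t, t)` for all `t`. -/
def SatisfiesEL (L : ℝ → ℝ → ℝ → ℝ) (x : ℝ → ℝ) : Prop :=
  ∀ t : ℝ, deriv (fun s => pv L (x s) (deriv x s) s) t = px L (x t) (deriv x t) t

/-- Partial derivative of `f (x, t)` in the first argument. -/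
noncomputable def pd1 (f : ℝ × ℝ → ℝ) (x t : ℝ) : ℝ := deriv (fun y => f (y, t)) x

/-- Partial derivative of `f (x, t)` in the second argument. -/
noncomputable def pd2 (f : ℝ × ℝ → ℝ) (x t : ℝ) : ℝ := deriv (fun s => f (x, s)) t

theorem one_parameter_family_for_quadratic_friction
    (k C n : ℝ) (hC : C ≠ 0) (hn0 : n ≠ 0) (hn1 : n ≠ 1)
    (L : ℝ → ℝ → ℝ → ℝ)
    (hL : ∀ x t : ℝ, ∀ v : ℝ, 0 < v → L x v t = C * v ^ n * Real.exp (n * k * x))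
    (x : ℝ → ℝ) (hx : Differentiable ℝ x) (hx' : Differentiable ℝ (deriv x))
    (hxpos : ∀ t : ℝ, 0 < deriv x t) :
    SatisfiesEL L x ↔
      ∀ t : ℝ, deriv (deriv x) t + k * (deriv x t) ^ 2 = 0 := by
  -- Compute pv
  have hpv : ∀ a t v : ℝ, 0 < v →
      pv L a v t = C * n * v ^ (n - 1) * Real.exp (n * k * a) := by
    intro a t v hv
    have hev : (fun w => L a w t) =ᶠ[nhds v]
        (fun w => C * w ^ n * Real.exp (n * k * a)) := by
      filter_upwards [Ioi_mem_nhds hv] with w hw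
      exact hL a t w hw
    have hd : HasDerivAt (fun w => C * w ^ n * Real.exp (n * k * a))
        ((C * (n * v ^ (n - 1))) * Real.exp (n * k * a)) v :=
      ((Real.hasDerivAt_rpow_const (Or.inl hv.ne')).const_mul C).mul_const _
    rw [pv, hev.deriv_eq, hd.deriv]
    ring
  -- Compute px
  have hpx : ∀ a t v : ℝ, 0 < v →
      px L a v t = C * v ^ n * (n * k) * Real.exp (n * k * a) := by
    intro a t v hv
    have hfe : (fun y => L y v t) = fun y => C * v ^ n * Real.exp (n * k * y) :=
      funext fun y => hL y t v hv
    have h1 : HasDerivAt (fun y : ℝ => n * k * y) (n * k * 1) a :=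
      (hasDerivAt_id a).const_mul (n * k)
    have hd : HasDerivAt (fun y => C * v ^ n * Real.exp (n * k * y))
        (C * v ^ n * (Real.exp (n * k * a) * (n * k * 1))) a :=
      (h1.exp).const_mul (C * v ^ n)
    rw [px, hfe, hd.deriv]
    ring
  have hgfun : (fun s => pv L (x s) (deriv x s) s)
      = fun s => C * n * (deriv x s) ^ (n - 1) * Real.exp (n * k * x s) :=
    funext fun s => hpv (x s) s (deriv x s) (hxpos s)
  rw [SatisfiesEL, hgfun]
  refine forall_congr' fun t => ?_
  rw [hpx (x t) t (deriv x t) (hxpos t)]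
  set v := deriv x t with hvdef
  set a := deriv (deriv x) t with hadef
  have hv : 0 < v := hxpos t
  have hx'' : HasDerivAt (deriv x) a t := (hx' t).hasDerivAt
  have hrpow : HasDerivAt (fun s => (deriv x s) ^ (n - 1))
      ((n - 1) * v ^ (n - 1 - 1) * a) t := by
    have := (Real.hasDerivAt_rpow_const (p := n - 1) (Or.inl hv.ne')).comp t hx''
    simpa [mul_assoc, Function.comp_def] using this
  have hexp : HasDerivAt (fun s => Real.exp (n * k * x s))
      (Real.exp (n * k * x t) * (n * k * v)) t := by
    have h1 : HasDerivAt (fun s => n * k * x s) (n * k * v) t := by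
      simpa using ((hx t).hasDerivAt.const_mul (n * k))
    exact h1.exp
  have hG : HasDerivAt (fun s => C * n * (deriv x s) ^ (n - 1) * Real.exp (n * k * x s))
      ((C * n * ((n - 1) * v ^ (n - 1 - 1) * a)) * Real.exp (n * k * x t)
        + (C * n * v ^ (n - 1)) * (Real.exp (n * k * x t) * (n * k * v))) t :=
    (hrpow.const_mul (C * n)).mul hexp
  rw [hG.deriv]
  -- rpow identities
  have e1 : n - 1 - 1 = n - 2 := by ring
  have e2 : v ^ (n - 1) = v ^ (n - 2) * v := by
    rw [show n - 1 = (n - 2) + 1 by ring, Real.rpow_add hv, Real.rpow_one]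
  have e3 : v ^ n = v ^ (n - 2) * v ^ 2 := by
    have h2 : v ^ (2 : ℕ) = v ^ ((2 : ℕ) : ℝ) := (Real.rpow_natCast v 2).symm
    rw [h2, ← Real.rpow_add hv]
    norm_num
  rw [e1, e2, e3]
  set w := v ^ (n - 2) with hwdef
  have hwne : w ≠ 0 := (Real.rpow_pos_of_pos hv _).ne'
  have hE : Real.exp (n * k * x t) ≠ 0 := Real.exp_ne_zero _
  have hne : C * n * Real.exp (n * k * x t) * w * (n - 1) ≠ 0 := by
    have h1 : n - 1 ≠ 0 := sub_ne_zero.mpr hn1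
    positivity
  constructor
  · intro h
    have h2 : (C * n * Real.exp (n * k * x t) * w * (n - 1)) * (a + k * v ^ 2) = 0 := by
      linear_combination h
    exact (mul_eq_zero.mp h2).resolve_left hne
  · intro h
    linear_combination (C * n * Real.exp (n * k * x t) * w * (n - 1)) * h
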